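/- Suppose F is locally Lipschitzian at x̄ and WMin(F(x̄),K) ≠ ∅. Then the scalarizing functional f_{l,x̄} is locally Lipschitzian at x̄, i.e., there is a neighborhood of x̄ on which f_{l,x̄} is finite and Lipschitzian. -/

import Mathlib

open Set Topology Metric Pointwise

/-- The Gerstewitz (Tammer) scalarizing functional `Ψ_e(y) = inf {t : y ∈ t•e - K}`. -/
noncomputable def psiE {Y : Type*} [NormedAddCommGroup Y] [NormedSpace ℝ Y]
    (K : Set Y) (e : Y) (y : Y) : ℝ :=
  sInf {t : ℝ | t • e - y ∈ K}

/-- The lower inner function `g_l(x,z) = inf_{y ∈ F x} Ψ_e (y - z)` (with values in `EReal`). -/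
noncomputable def glow {X Y : Type*} [NormedAddCommGroup X] [NormedSpace ℝ X]
    [NormedAddCommGroup Y] [NormedSpace ℝ Y]
    (K : Set Y) (e : Y) (F : X → Set Y) (x : X) (z : Y) : EReal :=
  ⨅ y ∈ F x, (psiE K e (y - z) : EReal)

/-- The upper inner function `g_{u,x̄}(y) = inf_{ȳ ∈ F x̄} Ψ_e (y - ȳ)`. -/
noncomputable def gupp {X Y : Type*} [NormedAddCommGroup X] [NormedSpace ℝ X]
    [NormedAddCommGroup Y] [NormedSpace ℝ Y]
    (K : Set Y) (e : Y) (F : X → Set Y) (xbar : X) (y : Y) : EReal :=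
  ⨅ yb ∈ F xbar, (psiE K e (y - yb) : EReal)

/-- The lower scalarizing functional `f_{l,x̄}(x) = sup_{ȳ ∈ F x̄} g_l(x, ȳ)`. -/
noncomputable def flow {X Y : Type*} [NormedAddCommGroup X] [NormedSpace ℝ X]
    [NormedAddCommGroup Y] [NormedSpace ℝ Y]
    (K : Set Y) (e : Y) (F : X → Set Y) (xbar : X) (x : X) : EReal :=
  ⨆ yb ∈ F xbar, glow K e F x yb

/-- The upper scalarizing functional `f_{u,x̄}(x) = sup_{y ∈ F x} g_{u,x̄}(y)`. -/
noncomputable def fupp {X Y : Type*} [NormedAddCommGroup X] [NormedSpace ℝ X]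
    [NormedAddCommGroup Y] [NormedSpace ℝ Y]
    (K : Set Y) (e : Y) (F : X → Set Y) (xbar : X) (x : X) : EReal :=
  ⨆ y ∈ F x, gupp K e F xbar y

/-- Weakly minimal elements: `WMin(A,K) = {a ∈ A : (a - int K) ∩ A = ∅}`. -/
def wMinSet {Y : Type*} [NormedAddCommGroup Y] (A K : Set Y) : Set Y :=
  {a ∈ A | ∀ b ∈ A, a - b ∉ interior K}

/-- Weakly maximal elements: `WMax(A,K) = {a ∈ A : (a + int K) ∩ A = ∅}`. -/
def wMaxSet {Y : Type*} [NormedAddCommGroup Y] (A K : Set Y) : Set Y :=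
  {a ∈ A | ∀ b ∈ A, b - a ∉ interior K}

/-- Minimal elements: `Min(A,K) = {a ∈ A : (a - K) ∩ A = {a}}`. -/
def minSet {Y : Type*} [AddGroup Y] (A K : Set Y) : Set Y :=
  {a ∈ A | ∀ b ∈ A, a - b ∈ K → b = a}

section aux
variable {Y : Type*} [NormedAddCommGroup Y] [NormedSpace ℝ Y]
variable {K : Set Y} {e : Y} {r : ℝ}

lemma addK (hKcv : Convex ℝ K) (hKcone : ∀ t : ℝ, 0 ≤ t → ∀ y ∈ K, t • y ∈ K)
    {a b : Y} (ha : a ∈ K) (hb : b ∈ K) : a + b ∈ K := by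
  have h := hKcv ha hb (by norm_num : (0:ℝ) ≤ 1/2) (by norm_num : (0:ℝ) ≤ 1/2) (by norm_num)
  have h2 := hKcone 2 (by norm_num) _ h
  have : (2:ℝ) • ((1/2 : ℝ) • a + (1/2 : ℝ) • b) = a + b := by
    rw [smul_add, smul_smul, smul_smul]; norm_num
  rwa [this] at h2

lemma smulIntK (hKcone : ∀ t : ℝ, 0 ≤ t → ∀ y ∈ K, t • y ∈ K)
    {c : ℝ} (hc : 0 < c) {y : Y} (hy : y ∈ interior K) : c • y ∈ interior K := by
  have hsub : c • interior K ⊆ K := by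
    rintro _ ⟨u, hu, rfl⟩
    exact hKcone c hc.le u (interior_subset hu)
  have hopen : IsOpen (c • interior K) := isOpen_interior.smul₀ hc.ne'
  exact interior_maximal hsub hopen (smul_mem_smul_set hy)

lemma addIntK (hKcv : Convex ℝ K) (hKcone : ∀ t : ℝ, 0 ≤ t → ∀ y ∈ K, t • y ∈ K)
    {a u : Y} (ha : a ∈ K) (hu : u ∈ interior K) : a + u ∈ interior K := by
  have hopen : IsOpen ((fun v => a + v) '' interior K) :=
    (isOpenMap_add_left a) _ isOpen_interior
  have hsub : (fun v => a + v) '' interior K ⊆ K := by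
    rintro _ ⟨v, hv, rfl⟩
    exact addK hKcv hKcone ha (interior_subset hv)
  exact interior_maximal hsub hopen ⟨u, hu, rfl⟩

lemma noNegInt (hKpt : K ∩ (-K) = {0}) (hnt : ∃ y : Y, y ≠ 0)
    {z : Y} (hz : z ∈ K) (hz' : -z ∈ interior K) : False := by
  have hz0 : z = 0 := by
    have : z ∈ K ∩ (-K) := ⟨hz, by simpa using interior_subset hz'⟩
    rwa [hKpt, mem_singleton_iff] at this
  rw [hz0, neg_zero] at hz'
  obtain ⟨y0, hy0⟩ := hnt
  obtain ⟨ε, hε, hball⟩ := Metric.mem_nhds_iff.mp (mem_interior_iff_mem_nhds.mp hz')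
  set w := (ε / (2 * ‖y0‖)) • y0 with hw
  have h0 : 0 < ‖y0‖ := norm_pos_iff.mpr hy0
  have hcpos : 0 < ε / (2 * ‖y0‖) := div_pos hε (by linarith)
  have hwne : w ≠ 0 := smul_ne_zero hcpos.ne' hy0
  have hwnorm : ‖w‖ < ε := by
    rw [hw, norm_smul, Real.norm_eq_abs, abs_of_pos hcpos, div_mul_eq_mul_div,
      div_lt_iff₀ (by linarith : (0:ℝ) < 2 * ‖y0‖)]
    nlinarith [norm_pos_iff.mpr hy0, hε]
  have hwK : w ∈ K := hball (by simpa [mem_ball, dist_zero_right] using hwnorm)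
  have hwK' : -w ∈ K := hball (by simpa [mem_ball, dist_zero_right] using hwnorm)
  have : w ∈ K ∩ (-K) := ⟨hwK, by simpa using hwK'⟩
  rw [hKpt, mem_singleton_iff] at this
  exact hwne this

lemma memS (hKcone : ∀ t : ℝ, 0 ≤ t → ∀ y ∈ K, t • y ∈ K) (hKpt : K ∩ (-K) = {0})
    (hr : 0 < r) (hre : closedBall e r ⊆ K) (y : Y) : (‖y‖ / r) • e - y ∈ K := by
  have h0K : (0:Y) ∈ K := by
    have : (0:Y) ∈ K ∩ (-K) := by rw [hKpt]; exact rfl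
    exact this.1
  rcases eq_or_ne y 0 with rfl | hy
  · simpa using h0K
  · set d := ‖y‖ / r with hd
    have hdpos : 0 < d := div_pos (norm_pos_iff.mpr hy) hr
    have hmem : e - d⁻¹ • y ∈ closedBall e r := by
      rw [mem_closedBall, dist_eq_norm]
      have : ‖d⁻¹ • y‖ = r := by
        rw [norm_smul, Real.norm_eq_abs, abs_of_pos (by positivity), hd, inv_div,
          div_mul_cancel₀ r (norm_ne_zero_iff.mpr hy)]
      simp only [sub_sub_cancel_left, norm_neg]
      exact this.le
    have := hKcone d hdpos.le _ (hre hmem)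
    have heq : d • (e - d⁻¹ • y) = d • e - y := by
      rw [smul_sub, smul_smul, mul_inv_cancel₀ hdpos.ne', one_smul]
    rwa [heq] at this

lemma bddS (hKcv : Convex ℝ K) (hKcone : ∀ t : ℝ, 0 ≤ t → ∀ y ∈ K, t • y ∈ K)
    (hKpt : K ∩ (-K) = {0}) (hnt : ∃ y : Y, y ≠ 0)
    (hr : 0 < r) (hre : closedBall e r ⊆ K)
    {y : Y} {t : ℝ} (ht : t • e - y ∈ K) : -(‖y‖ / r) ≤ t := by
  by_contra h
  push_neg at h
  set s := -t with hs
  have hspos : 0 < s := by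
    have : 0 ≤ ‖y‖ / r := by positivity
    simp only [hs]; linarith
  have hsy : ‖y‖ / r < s := by simp only [hs]; linarith
  have hmem : e + s⁻¹ • y ∈ ball e r := by
    rw [mem_ball, dist_eq_norm]
    have : ‖s⁻¹ • y‖ < r := by
      rw [norm_smul, Real.norm_eq_abs, abs_of_pos (by positivity)]
      rw [div_lt_iff₀ hr] at hsy
      rw [inv_mul_lt_iff₀ hspos]
      linarith [hsy]
    simpa [add_sub_cancel_left] using this
  have hballint : ball e r ⊆ interior K :=
    interior_maximal (Metric.ball_subset_closedBall.trans hre) isOpen_ball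
  have hint : s • (e + s⁻¹ • y) ∈ interior K := smulIntK hKcone hspos (hballint hmem)
  have heq : s • (e + s⁻¹ • y) = -(t • e - y) := by
    rw [smul_add, smul_smul, mul_inv_cancel₀ hspos.ne', one_smul, hs, neg_smul, neg_sub,
      sub_eq_neg_add]
  rw [heq] at hint
  exact noNegInt hKpt hnt ht hint

end aux

section psi
variable {Y : Type*} [NormedAddCommGroup Y] [NormedSpace ℝ Y]
variable {K : Set Y} {e : Y} {r : ℝ}
variable (hKcv : Convex ℝ K) (hKcone : ∀ t : ℝ, 0 ≤ t → ∀ y ∈ K, t • y ∈ K)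
variable (hKpt : K ∩ (-K) = {0}) (hnt : ∃ y : Y, y ≠ 0)
variable (hr : 0 < r) (hre : closedBall e r ⊆ K)

include hKcv hKcone hKpt hnt hr hre

lemma psi_bddBelow (y : Y) : BddBelow {t : ℝ | t • e - y ∈ K} :=
  ⟨-(‖y‖ / r), fun t ht => bddS hKcv hKcone hKpt hnt hr hre ht⟩

lemma psi_nonempty (y : Y) : {t : ℝ | t • e - y ∈ K}.Nonempty :=
  ⟨‖y‖ / r, memS hKcone hKpt hr hre y⟩

lemma psi_le_norm (y : Y) : psiE K e y ≤ ‖y‖ / r :=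
  csInf_le (psi_bddBelow hKcv hKcone hKpt hnt hr hre y) (memS hKcone hKpt hr hre y)

lemma norm_le_psi (y : Y) : -(‖y‖ / r) ≤ psiE K e y :=
  le_csInf (psi_nonempty hKcv hKcone hKpt hnt hr hre y)
    (fun t ht => bddS hKcv hKcone hKpt hnt hr hre ht)

lemma psi_lip (a b : Y) : psiE K e a ≤ psiE K e b + ‖a - b‖ / r := by
  set d := ‖a - b‖ / r with hd
  have key : ∀ t ∈ {t : ℝ | t • e - b ∈ K}, psiE K e a ≤ t + d := by
    intro t ht
    have hmem : (t + d) • e - a ∈ K := by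
      have h1 : (t + d) • e - a = (t • e - b) + (d • e - (a - b)) := by
        rw [add_smul]; abel
      rw [h1]
      exact addK hKcv hKcone ht (memS hKcone hKpt hr hre (a - b))
    exact csInf_le (psi_bddBelow hKcv hKcone hKpt hnt hr hre a) hmem
  have : psiE K e a - d ≤ psiE K e b :=
    le_csInf (psi_nonempty hKcv hKcone hKpt hnt hr hre b)
      (fun t ht => by linarith [key t ht])
  linarith

lemma psi_zero : psiE K e 0 = 0 := by
  apply le_antisymm
  · have := psi_le_norm hKcv hKcone hKpt hnt hr hre (0 : Y)
    simpa using this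
  · have := norm_le_psi hKcv hKcone hKpt hnt hr hre (0 : Y)
    simpa using this

lemma psi_nonneg (he : e ∈ interior K) {y : Y} (hy : -y ∉ interior K) :
    0 ≤ psiE K e y := by
  by_contra h
  push_neg at h
  obtain ⟨t, ht, ht0⟩ := exists_lt_of_csInf_lt (psi_nonempty hKcv hKcone hKpt hnt hr hre y) h
  have hne : (-t) • e ∈ interior K := smulIntK hKcone (by linarith) he
  have hmem : -y ∈ interior K := by
    have h2 := addIntK hKcv hKcone ht hne
    have heq : (t • e - y) + (-t) • e = -y := by rw [neg_smul]; abel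
    rwa [heq] at h2
  exact hy hmem

end psi

lemma ereal_le_iInf_add {ι : Sort*} (f : ι → ℝ) (c : ℝ) (A : EReal)
    (h : ∀ i, A ≤ ((f i + c : ℝ) : EReal)) :
    A ≤ (⨅ i, ((f i : ℝ) : EReal)) + (c : EReal) := by
  rcases isEmpty_or_nonempty ι with hι | hι
  · rw [iInf_of_empty, EReal.top_add_coe]
    exact le_top
  · set B := ⨅ i, ((f i : ℝ) : EReal) with hB
    rcases eq_or_ne B ⊥ with hb | hb
    · have hA : ∀ M : ℝ, A ≤ (M : EReal) := by
        intro M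
        have hlt : B < ((M - c : ℝ) : EReal) := by rw [hb]; exact EReal.bot_lt_coe _
        obtain ⟨i, hi⟩ := iInf_lt_iff.mp hlt
        have hfi : f i < M - c := EReal.coe_lt_coe_iff.mp hi
        calc A ≤ ((f i + c : ℝ) : EReal) := h i
          _ ≤ (M : EReal) := EReal.coe_le_coe_iff.mpr (by linarith)
      have hAbot : A = ⊥ := by
        induction A using EReal.rec with
        | bot => rfl
        | coe t => exact absurd (EReal.coe_le_coe_iff.mp (hA (t - 1))) (by linarith)
        | top => exact absurd (hA 0) (by simp)
      rw [hAbot, hb, EReal.bot_add]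
    · have hbt : B ≠ ⊤ := by
        obtain ⟨i⟩ := hι
        exact ne_top_of_le_ne_top (EReal.coe_ne_top (f i)) (iInf_le _ i)
      set b := B.toReal with hbdef
      have hBb : B = (b : EReal) := (EReal.coe_toReal hbt hb).symm
      have key : ∀ ε : ℝ, 0 < ε → A ≤ ((b + c + ε : ℝ) : EReal) := by
        intro ε hε
        have hlt : B < ((b + ε : ℝ) : EReal) := by
          rw [hBb]; exact_mod_cast (by linarith : b < b + ε)
        obtain ⟨i, hi⟩ := iInf_lt_iff.mp hlt
        have hfi : f i < b + ε := EReal.coe_lt_coe_iff.mp hi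
        calc A ≤ ((f i + c : ℝ) : EReal) := h i
          _ ≤ _ := EReal.coe_le_coe_iff.mpr (by linarith)
      rw [hBb, ← EReal.coe_add]
      by_contra hcon
      push_neg at hcon
      obtain ⟨m, hm1, hm2⟩ := exists_between hcon
      have hmb : m ≠ ⊥ := ((EReal.bot_lt_coe _).trans hm1).ne'
      have hmt : m ≠ ⊤ := (hm2.trans_le le_top).ne
      set M := m.toReal with hMdef
      have hMm : m = (M : EReal) := (EReal.coe_toReal hmt hmb).symm
      have hbcM : b + c < M := EReal.coe_lt_coe_iff.mp (by rw [← hMm]; exact hm1)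
      have hle := key (M - (b + c)) (by linarith)
      rw [show b + c + (M - (b + c)) = M by ring] at hle
      have hmm : m < (M : EReal) := hm2.trans_le hle
      rw [hMm] at hmm
      exact lt_irrefl _ hmm

/-- if F is locally Lipschitz at x̄ and WMin(F(x̄),K) ≠ ∅, then f_{l,x̄} is
locally Lipschitz at x̄ (finite and Lipschitz on some neighborhood of x̄). -/
theorem stmt11
    {X Y : Type*} [NormedAddCommGroup X] [NormedSpace ℝ X] [CompleteSpace X]
    [NormedAddCommGroup Y] [NormedSpace ℝ Y] [CompleteSpace Y]
    (K : Set Y) (e : Y) (F : X → Set Y) (Ω : Set X) (xbar : X)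
    (hKcl : IsClosed K) (hKcv : Convex ℝ K)
    (hKcone : ∀ t : ℝ, 0 ≤ t → ∀ y ∈ K, t • y ∈ K)
    (hKpt : K ∩ (-K) = {0})
    (he : e ∈ interior K)
    (hΩne : Ω.Nonempty) (hΩcl : IsClosed Ω)
    (hΩdom : Ω ⊆ interior {x | (F x).Nonempty})
    (hxΩ : xbar ∈ Ω)
    (hFlip : ∃ U ∈ 𝓝 xbar, ∃ ℓ : ℝ, 0 ≤ ℓ ∧
      ∀ x ∈ U, ∀ x' ∈ U, F x ⊆ F x' + Metric.closedBall (0 : Y) (ℓ * ‖x - x'‖))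
    (hW : (wMinSet (F xbar) K).Nonempty) :
    ∃ V ∈ 𝓝 xbar, ∃ c : ℝ,
      (∀ x ∈ V, flow K e F xbar x ≠ ⊥ ∧ flow K e F xbar x ≠ ⊤) ∧
      (∀ x ∈ V, ∀ x' ∈ V,
        |(flow K e F xbar x).toReal - (flow K e F xbar x').toReal| ≤ c * ‖x - x'‖) := by
  by_cases hY : ∀ y : Y, y = 0
  · -- degenerate case: Y is trivial
    obtain ⟨w, hwF, hwmin⟩ := hW
    have h0K : (0 : Y) ∈ K := by
      have h0 : (0 : Y) ∈ K ∩ (-K) := by rw [hKpt]; exact rfl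
      exact h0.1
    have hpsi : ∀ y : Y, psiE K e y = 0 := by
      intro y
      have hset : {t : ℝ | t • e - y ∈ K} = univ := by
        ext t
        simp only [mem_setOf_eq, mem_univ, iff_true]
        rw [hY (t • e - y)]
        exact h0K
      rw [psiE, hset]
      exact Real.sInf_of_not_bddBelow not_bddBelow_univ
    have hg : ∀ x : X, (F x).Nonempty → ∀ z : Y, glow K e F x z = 0 := by
      intro x hne z
      obtain ⟨y0, hy0⟩ := hne
      apply le_antisymm
      · have h1 : glow K e F x z ≤ ((psiE K e (y0 - z) : ℝ) : EReal) :=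
          iInf₂_le y0 hy0
        rw [hpsi] at h1
        simpa using h1
      · apply le_iInf₂
        intro y hy
        rw [hpsi]
        simp
    have hflow0 : ∀ x : X, (F x).Nonempty → flow K e F xbar x = 0 := by
      intro x hne
      apply le_antisymm
      · apply iSup₂_le
        intro z hz
        rw [hg x hne z]
      · have := le_iSup₂ (f := fun z (_ : z ∈ F xbar) => glow K e F x z) w hwF
        rw [hg x hne w] at this
        exact this
    refine ⟨interior {x | (F x).Nonempty}, isOpen_interior.mem_nhds (hΩdom hxΩ), 1, ?_, ?_⟩
    · intro x hx
      have hxd : x ∈ {x | (F x).Nonempty} := interior_subset hx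
      rw [hflow0 x hxd]
      exact ⟨by simp, by simp⟩
    · intro x hx x' hx'
      have hxd : x ∈ {x | (F x).Nonempty} := interior_subset hx
      have hxd' : x' ∈ {x | (F x).Nonempty} := interior_subset hx'
      rw [hflow0 x hxd, hflow0 x' hxd']
      simp [norm_nonneg]
  · push_neg at hY
    obtain ⟨U, hU, ℓ, hℓ, hlip⟩ := hFlip
    obtain ⟨ε, hε, hball⟩ := Metric.mem_nhds_iff.mp (mem_interior_iff_mem_nhds.mp he)
    set r : ℝ := ε / 2 with hrdef
    have hr : 0 < r := by positivity
    have hre : closedBall e r ⊆ K :=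
      (closedBall_subset_ball (by rw [hrdef]; linarith)).trans hball
    obtain ⟨w, hwF, hwmin⟩ := hW
    set V := U ∩ interior {x | (F x).Nonempty} with hVdef
    have hVnhds : V ∈ 𝓝 xbar :=
      Filter.inter_mem hU (isOpen_interior.mem_nhds (hΩdom hxΩ))
    have hxbarV : xbar ∈ V := mem_of_mem_nhds hVnhds
    -- key inner estimate
    have hkey : ∀ x ∈ V, ∀ x' ∈ V, ∀ z : Y,
        glow K e F x' z ≤ glow K e F x z + ((ℓ / r * ‖x - x'‖ : ℝ) : EReal) := by
      intro x hx x' hx' z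
      set c : ℝ := ℓ / r * ‖x - x'‖ with hcdef
      have hrw : glow K e F x z
          = ⨅ y : F x, ((psiE K e ((y : Y) - z) : ℝ) : EReal) := by
        rw [glow, ← iInf_subtype'']
      rw [hrw]
      apply ereal_le_iInf_add (fun y : F x => psiE K e ((y : Y) - z)) c
      rintro ⟨y, hy⟩
      have hsub := hlip x hx.1 x' hx'.1 hy
      rw [Set.mem_add] at hsub
      obtain ⟨y', hy', bb, hbb, hyeq⟩ := hsub
      have hbbn : ‖bb‖ ≤ ℓ * ‖x - x'‖ := by
        rw [mem_closedBall, dist_zero_right] at hbb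
        exact hbb
      have h1 : psiE K e (y' - z) ≤ psiE K e (y - z) + c := by
        have hl := psi_lip hKcv hKcone hKpt hY hr hre (y' - z) (y - z)
        have hnorm : ‖(y' - z) - (y - z)‖ = ‖bb‖ := by
          rw [show (y' - z) - (y - z) = -bb by rw [← hyeq]; abel, norm_neg]
        rw [hnorm] at hl
        have hfrac : ‖bb‖ / r ≤ c := by
          rw [hcdef, div_mul_eq_mul_div]
          gcongr
        linarith
      have h2 : glow K e F x' z ≤ ((psiE K e (y' - z) : ℝ) : EReal) :=
        iInf₂_le y' hy'
      exact h2.trans (EReal.coe_le_coe_iff.mpr h1)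
    -- flow estimate
    have hflowkey : ∀ x ∈ V, ∀ x' ∈ V,
        flow K e F xbar x' ≤ flow K e F xbar x + ((ℓ / r * ‖x - x'‖ : ℝ) : EReal) := by
      intro x hx x' hx'
      rw [flow]
      apply iSup₂_le
      intro z hz
      calc glow K e F x' z
          ≤ glow K e F x z + ((ℓ / r * ‖x - x'‖ : ℝ) : EReal) := hkey x hx x' hx' z
        _ ≤ flow K e F xbar x + ((ℓ / r * ‖x - x'‖ : ℝ) : EReal) := by
            apply add_le_add_left
            exact le_iSup₂ (f := fun z (_ : z ∈ F xbar) => glow K e F x z) z hz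
    -- flow at xbar is 0
    have hflowbar : flow K e F xbar xbar = 0 := by
      apply le_antisymm
      · apply iSup₂_le
        intro z hz
        have h1 : glow K e F xbar z ≤ ((psiE K e (z - z) : ℝ) : EReal) :=
          iInf₂_le z hz
        rw [sub_self, psi_zero hKcv hKcone hKpt hY hr hre] at h1
        simpa using h1
      · have h1 : (0 : EReal) ≤ glow K e F xbar w := by
          apply le_iInf₂
          intro y hy
          have hnot : -(y - w) ∉ interior K := by
            rw [neg_sub]
            exact hwmin y hy
          have h2 := psi_nonneg hKcv hKcone hKpt hY hr hre he hnot
          exact_mod_cast h2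
        exact h1.trans (le_iSup₂ (f := fun z (_ : z ∈ F xbar) => glow K e F xbar z) w hwF)
    -- finiteness
    have hfin : ∀ x ∈ V, flow K e F xbar x ≠ ⊥ ∧ flow K e F xbar x ≠ ⊤ := by
      intro x hx
      constructor
      · intro hbot
        have h1 := hflowkey x hx xbar hxbarV
        rw [hflowbar, hbot, EReal.bot_add] at h1
        simp at h1
      · intro htop
        have h1 := hflowkey xbar hxbarV x hx
        rw [hflowbar, htop, zero_add] at h1
        exact absurd h1 (not_le.mpr (EReal.coe_lt_top _))
    refine ⟨V, hVnhds, ℓ / r, hfin, ?_⟩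
    intro x hx x' hx'
    obtain ⟨hb, ht⟩ := hfin x hx
    obtain ⟨hb', ht'⟩ := hfin x' hx'
    set a := (flow K e F xbar x).toReal with ha
    set b := (flow K e F xbar x').toReal with hbdef
    have hax : flow K e F xbar x = (a : EReal) := (EReal.coe_toReal ht hb).symm
    have hbx : flow K e F xbar x' = (b : EReal) := (EReal.coe_toReal ht' hb').symm
    have h1 := hflowkey x hx x' hx'
    have h2 := hflowkey x' hx' x hx
    rw [hax, hbx, ← EReal.coe_add] at h1
    rw [hax, hbx, ← EReal.coe_add] at h2
    have h1' : b ≤ a + ℓ / r * ‖x - x'‖ := EReal.coe_le_coe_iff.mp h1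
    have h2' : a ≤ b + ℓ / r * ‖x' - x‖ := EReal.coe_le_coe_iff.mp h2
    rw [norm_sub_rev] at h2'
    rw [abs_sub_le_iff]
    constructor
    · linarith
    · linarith
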